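/- arXiv:math/0202201 — 2 statements merged into one kernel-verified Lean document; each statement's English description precedes it below -/
import Mathlib

section
/- For all ξ, η ∈ ℝ³ and all indices 1 ≤ i, j ≤ 3, the null-form symbol q_{ij}(ξ,η) = ξᵢηⱼ − ξⱼηᵢ satisfies |q_{ij}(ξ,η)| ≤ |ξ × η| ≤ |ξ + η| · |ξ|^(1/2) · |η|^(1/2). -/
noncomputable def crossE (ξ η : EuclideanSpace ℝ (Fin 3)) : EuclideanSpace ℝ (Fin 3) :=
  (WithLp.equiv 2 (Fin 3 → ℝ)).symm
    ![ξ 1 * η 2 - ξ 2 * η 1, ξ 2 * η 0 - ξ 0 * η 2, ξ 0 * η 1 - ξ 1 * η 0]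

private lemma abs_coord_le (v : EuclideanSpace ℝ (Fin 3)) (k : Fin 3) : |v k| ≤ ‖v‖ := by
  rw [EuclideanSpace.norm_eq, ← Real.sqrt_sq_eq_abs]
  simp only [Real.norm_eq_abs, sq_abs]
  apply Real.sqrt_le_sqrt
  exact Finset.single_le_sum (f := fun i => v i ^ 2) (fun i _ => sq_nonneg _) (Finset.mem_univ k)

private lemma cross_sq (ξ η : EuclideanSpace ℝ (Fin 3)) :
    ‖crossE ξ η‖ ^ 2 = (ξ 1 * η 2 - ξ 2 * η 1)^2 + (ξ 2 * η 0 - ξ 0 * η 2)^2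
      + (ξ 0 * η 1 - ξ 1 * η 0)^2 := by
  rw [EuclideanSpace.norm_eq, Real.sq_sqrt (by positivity)]
  simp [crossE, Fin.sum_univ_three, WithLp.equiv_symm_apply, PiLp.toLp_apply]

private lemma norm_sq_coord (ξ : EuclideanSpace ℝ (Fin 3)) :
    ‖ξ‖ ^ 2 = ξ 0 ^ 2 + ξ 1 ^ 2 + ξ 2 ^ 2 := by
  rw [EuclideanSpace.norm_eq, Real.sq_sqrt (by positivity)]
  simp [Fin.sum_univ_three]

theorem nullform_symbol_estimate (ξ η : EuclideanSpace ℝ (Fin 3)) (i j : Fin 3) :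
    |ξ i * η j - ξ j * η i| ≤ ‖crossE ξ η‖ ∧
      ‖crossE ξ η‖ ≤ ‖ξ + η‖ * ‖ξ‖ ^ ((1 : ℝ) / 2) * ‖η‖ ^ ((1 : ℝ) / 2) := by
  constructor
  · have hc := abs_coord_le (crossE ξ η)
    have h0 : |ξ 1 * η 2 - ξ 2 * η 1| ≤ ‖crossE ξ η‖ := hc 0
    have h1 : |ξ 2 * η 0 - ξ 0 * η 2| ≤ ‖crossE ξ η‖ := hc 1
    have h2 : |ξ 0 * η 1 - ξ 1 * η 0| ≤ ‖crossE ξ η‖ := hc 2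
    fin_cases i <;> fin_cases j <;>
      first
        | simp only [mul_comm, sub_self, abs_zero]; exact norm_nonneg (crossE ξ η)
        | assumption
        | (rw [abs_sub_comm]; first | exact h0 | exact h1 | exact h2)
  · set a := ‖ξ‖ with ha
    set b := ‖η‖ with hb
    set s := ‖ξ + η‖ with hs
    set c := ‖crossE ξ η‖ with hcc
    have ha0 : 0 ≤ a := norm_nonneg _
    have hb0 : 0 ≤ b := norm_nonneg _
    have hs0 : 0 ≤ s := norm_nonneg _
    have hc0 : 0 ≤ c := norm_nonneg _
    have hsum : ∀ k, (ξ + η) k = ξ k + η k := fun k => rfl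
    have hA : c ^ 2 ≤ s ^ 2 * a ^ 2 := by
      rw [cross_sq, hs, norm_sq_coord, hsum, hsum, hsum, ha, norm_sq_coord]
      nlinarith [sq_nonneg (ξ 0 * (ξ 0 + η 0) + ξ 1 * (ξ 1 + η 1) + ξ 2 * (ξ 2 + η 2)),
        sq_nonneg (ξ 1 * (ξ 2 + η 2) - ξ 2 * (ξ 1 + η 1)),
        sq_nonneg (ξ 2 * (ξ 0 + η 0) - ξ 0 * (ξ 2 + η 2)),
        sq_nonneg (ξ 0 * (ξ 1 + η 1) - ξ 1 * (ξ 0 + η 0))]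
    have hB : c ^ 2 ≤ s ^ 2 * b ^ 2 := by
      rw [cross_sq, hs, norm_sq_coord, hsum, hsum, hsum, hb, norm_sq_coord]
      nlinarith [sq_nonneg (η 0 * (ξ 0 + η 0) + η 1 * (ξ 1 + η 1) + η 2 * (ξ 2 + η 2)),
        sq_nonneg (η 1 * (ξ 2 + η 2) - η 2 * (ξ 1 + η 1)),
        sq_nonneg (η 2 * (ξ 0 + η 0) - η 0 * (ξ 2 + η 2)),
        sq_nonneg (η 0 * (ξ 1 + η 1) - η 1 * (ξ 0 + η 0))]
    have h4 : (c ^ 2) ^ 2 ≤ (s ^ 2 * (a * b)) ^ 2 := by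
      nlinarith [mul_le_mul hA hB (sq_nonneg c) (by positivity : (0:ℝ) ≤ s ^ 2 * a ^ 2)]
    have hkey : c ^ 2 ≤ s ^ 2 * (a * b) := by
      have h5 := Real.sqrt_le_sqrt h4
      rwa [Real.sqrt_sq (sq_nonneg c), Real.sqrt_sq (by positivity)] at h5
    have hrhs : (s * a ^ ((1:ℝ)/2) * b ^ ((1:ℝ)/2)) ^ 2 = s ^ 2 * (a * b) := by
      rw [mul_pow, mul_pow, ← Real.rpow_natCast (a ^ ((1:ℝ)/2)) 2,
        ← Real.rpow_natCast (b ^ ((1:ℝ)/2)) 2, ← Real.rpow_mul ha0, ← Real.rpow_mul hb0]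
      norm_num
      ring
    have hrhs0 : 0 ≤ s * a ^ ((1:ℝ)/2) * b ^ ((1:ℝ)/2) := by positivity
    have h6 := Real.sqrt_le_sqrt (hrhs ▸ hkey)
    rwa [Real.sqrt_sq hc0, Real.sqrt_sq hrhs0] at h6
end

section
/- Let k : (0,∞) → (0,∞) be differentiable with |k'(r)| ≤ 1 for all r > 0. Fix τ ∈ ℝ, ξ ∈ ℝ³, and a unit vector ω ∈ S² not collinear with ξ, and let θ(r) be the angle between rω and ξ − rω. Define f(r) = τ − r ± k(|ξ − rω|). Then f'(r) ≤ −1 + |cos θ(r)| < 0 for all r > 0, and moreover |f'(r)| ≥ (1/2) sin²θ(r). -/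
open scoped RealInnerProductSpace

/-- The phase function `f(r) = τ - r ± k(|ξ - rω|)` has strictly negative derivative,
with the quantitative bounds `f'(r) ≤ -1 + |cos θ(r)|` and `|f'(r)| ≥ (1/2) sin²θ(r)`,
where `θ(r)` is the angle between `rω` and `ξ - rω`. -/
theorem phase_derivative_bound
    (k : ℝ → ℝ) (k' : ℝ → ℝ)
    (hkpos : ∀ r : ℝ, 0 < r → 0 < k r)
    (hk : ∀ r : ℝ, 0 < r → HasDerivAt k (k' r) r)
    (hk' : ∀ r : ℝ, 0 < r → |k' r| ≤ 1)
    (τ : ℝ) (ξ ω : EuclideanSpace ℝ (Fin 3)) (hω : ‖ω‖ = 1)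
    (hcol : ∀ t : ℝ, ξ ≠ t • ω)
    (ε : ℝ) (hε : ε = 1 ∨ ε = -1) :
    ∀ r : ℝ, 0 < r →
      deriv (fun r : ℝ => τ - r + ε * k ‖ξ - r • ω‖) r ≤
          -1 + |⟪ω, ξ - r • ω⟫ / ‖ξ - r • ω‖| ∧
      deriv (fun r : ℝ => τ - r + ε * k ‖ξ - r • ω‖) r < 0 ∧
      (1 / 2) * (1 - (⟪ω, ξ - r • ω⟫ / ‖ξ - r • ω‖) ^ 2) ≤
        |deriv (fun r : ℝ => τ - r + ε * k ‖ξ - r • ω‖) r| := by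
  intro r hr
  set v : EuclideanSpace ℝ (Fin 3) := ξ - r • ω with hv
  have hvne : v ≠ 0 := by
    intro h
    exact hcol r (by rwa [sub_eq_zero] at h)
  have hnv : 0 < ‖v‖ := norm_pos_iff.2 hvne
  -- derivative of r ↦ ξ - r • ω
  have hinner : HasDerivAt (fun s : ℝ => ξ - s • ω) (-ω) r := by
    simpa using ((hasDerivAt_id r).smul_const ω).const_sub ξ
  -- derivative of the squared norm
  have hsq : HasDerivAt (fun s : ℝ => ‖ξ - s • ω‖ ^ 2) (2 * ⟪ξ - r • ω, -ω⟫) r :=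
    hinner.norm_sq
  have hsqne : ‖ξ - r • ω‖ ^ 2 ≠ 0 := pow_ne_zero 2 hnv.ne'
  -- derivative of the norm
  have hnorm : HasDerivAt (fun s : ℝ => ‖ξ - s • ω‖) (⟪v, -ω⟫ / ‖v‖) r := by
    have h1 : HasDerivAt (fun s : ℝ => Real.sqrt (‖ξ - s • ω‖ ^ 2))
        (2 * ⟪ξ - r • ω, -ω⟫ / (2 * Real.sqrt (‖ξ - r • ω‖ ^ 2))) r :=
      hsq.sqrt hsqne
    have he : (fun s : ℝ => Real.sqrt (‖ξ - s • ω‖ ^ 2)) = fun s : ℝ => ‖ξ - s • ω‖ := by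
      funext s; rw [Real.sqrt_sq (norm_nonneg _)]
    rw [he] at h1
    convert h1 using 1
    rw [Real.sqrt_sq (norm_nonneg _)]
    field_simp [hv]
    rw [← hv, mul_comm, mul_div_cancel_right₀ _ hnv.ne']
  -- derivative of the full phase function, as a real number
  set c : ℝ := ⟪ω, v⟫ / ‖v‖ with hc
  have hgr : 0 < ‖v‖ := hnv
  have hcomp : HasDerivAt (fun s : ℝ => k ‖ξ - s • ω‖) (k' ‖v‖ * (⟪v, -ω⟫ / ‖v‖)) r :=
    (hk _ hgr).comp r hnorm
  have hf : HasDerivAt (fun s : ℝ => τ - s + ε * k ‖ξ - s • ω‖)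
      (-1 + ε * (k' ‖v‖ * (⟪v, -ω⟫ / ‖v‖))) r := by
    have h2 : HasDerivAt (fun s : ℝ => τ - s) (-1) r := by
      simpa using (hasDerivAt_id r).const_sub τ
    exact h2.add (hcomp.const_mul ε)
  have hderiv : deriv (fun s : ℝ => τ - s + ε * k ‖ξ - s • ω‖) r
      = -1 - ε * k' ‖v‖ * c := by
    rw [hf.deriv, hc]
    have : ⟪v, -ω⟫ = -⟪ω, v⟫ := by
      rw [real_inner_comm]; simp
    rw [this]
    ring
  -- bounds on c
  have hcs : |⟪ω, v⟫| ≤ ‖v‖ := by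
    calc |⟪ω, v⟫| ≤ ‖ω‖ * ‖v‖ := abs_real_inner_le_norm ω v
    _ = ‖v‖ := by rw [hω, one_mul]
  have hcle : |c| ≤ 1 := by
    rw [hc, abs_div, abs_of_pos hnv, div_le_one hnv]
    exact hcs
  have hclt : |c| < 1 := by
    rcases lt_or_eq_of_le hcle with h | h
    · exact h
    exfalso
    have habs : |⟪ω, v⟫| = ‖v‖ := by
      have := h
      rw [hc, abs_div, abs_of_pos hnv, div_eq_one_iff_eq hnv.ne'] at this
      exact this
    rcases abs_eq (norm_nonneg v) |>.1 habs with hpos | hneg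
    · -- ⟪ω, v⟫ = ‖v‖ : equality in Cauchy-Schwarz
      have : ⟪ω, v⟫ < ‖ω‖ * ‖v‖ := by
        rw [inner_lt_norm_mul_iff_real]
        intro h'
        rw [hω, one_smul, hv] at h'
        apply hcol (r + ‖v‖)
        rw [add_smul]
        linear_combination (norm := module) -h'
      rw [hω, one_mul] at this
      exact absurd hpos this.ne
    · -- ⟪ω, v⟫ = -‖v‖
      have : ⟪ω, -v⟫ < ‖ω‖ * ‖-v‖ := by
        rw [inner_lt_norm_mul_iff_real]
        intro h'
        rw [hω, one_smul, norm_neg, hv] at h'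
        apply hcol (r - ‖v‖)
        rw [sub_smul]
        linear_combination (norm := module) h'
      rw [hω, one_mul, norm_neg, inner_neg_right] at this
      have : -‖v‖ < ⟪ω, v⟫ := by linarith
      exact absurd hneg this.ne'
  -- |ε * k' ‖v‖ * c| ≤ |c|
  have hεabs : |ε| = 1 := by rcases hε with h | h <;> simp [h]
  have hkabs : |k' ‖v‖| ≤ 1 := hk' _ hgr
  have hbound : |ε * k' ‖v‖ * c| ≤ |c| := by
    rw [abs_mul, abs_mul, hεabs, one_mul]
    calc |k' ‖v‖| * |c| ≤ 1 * |c| := by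
          apply mul_le_mul_of_nonneg_right hkabs (abs_nonneg _)
    _ = |c| := one_mul _
  have hnla : -(ε * k' ‖v‖ * c) ≤ |c| := (neg_le_abs _).trans hbound
  refine ⟨?_, ?_, ?_⟩
  · rw [hderiv]; linarith
  · rw [hderiv]; linarith
  · rw [hderiv]
    have h3 : 1 - |c| ≤ |(-1 : ℝ) - ε * k' ‖v‖ * c| := by
      calc 1 - |c| ≤ -(-1 - ε * k' ‖v‖ * c) := by linarith
      _ ≤ |(-1 : ℝ) - ε * k' ‖v‖ * c| := neg_le_abs _
    have h4 : (1 / 2 : ℝ) * (1 - c ^ 2) ≤ 1 - |c| := by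
      nlinarith [sq_abs c, sq_nonneg (1 - |c|)]
    exact h4.trans h3
end
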